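/- Let S = (X_0,…,X_{d−1}) be a d-symbol with balanced quotient Q = Q(S) and core C = C(S). Let i ≠ j in {0,…,d−1} with Δ = |X_i| − |X_j| > 0. Then for all ℓ with 0 < ℓ < Δ: |H_{ij}^ℓ(S)| = |H_{ji}^{Δ−ℓ}(Q)| + |H_{ij}^ℓ(C)|. -/

import Mathlib

/-- `X^{+s} = (X + s) ∪ {0,…,s−1}` for a β-set `X`. -/
def shiftUp (X : Finset ℕ) (s : ℕ) : Finset ℕ :=
  X.image (· + s) ∪ Finset.range s

/-- The `d`-symbol `s_d(X)` associated to a β-set `X`: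
`X_i^{(d)} = {k ∈ ℕ : i + k*d ∈ X}`. -/
def sd (d : ℕ) (X : Finset ℕ) : Fin d → Finset ℕ :=
  fun i => (X.filter fun a => a % d = (i : ℕ)).image fun a => a / d

/-- The inverse of `s_d`, recovering the β-set of a `d`-symbol. -/
def sdInv (d : ℕ) (S : Fin d → Finset ℕ) : Finset ℕ :=
  Finset.univ.biUnion fun i => (S i).image fun k => (i : ℕ) + k * d

/-- Hooks of a β-set `X`: pairs `(a,b)` with `a > b`, `a ∈ X`, `b ∉ X`. -/
def betaHooks (X : Finset ℕ) : Finset (ℕ × ℕ) :=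
  (X ×ˢ Finset.range (X.sup id + 1)).filter fun p => p.2 < p.1 ∧ p.2 ∉ X

/-- Hooks of a `d`-symbol `S`: quadruples `(a,b,i,j)` with `a ∈ S i`, `b ∉ S j`,
and either `a > b`, or `a = b` and `i > j`. -/
def symbolHooks {d : ℕ} (S : Fin d → Finset ℕ) : Finset (ℕ × ℕ × Fin d × Fin d) :=
  (Finset.range ((Finset.univ.sup fun i => (S i).sup id) + 1) ×ˢ
      Finset.range ((Finset.univ.sup fun i => (S i).sup id) + 1) ×ˢ
      (Finset.univ : Finset (Fin d)) ×ˢ (Finset.univ : Finset (Fin d))).filter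
    fun z => z.1 ∈ S z.2.2.1 ∧ z.2.1 ∉ S z.2.2.2 ∧
      (z.2.1 < z.1 ∨ (z.1 = z.2.1 ∧ z.2.2.2 < z.2.2.1))

/-- The partition `p(X)` of a β-set `X = {a_1 > … > a_t}`, as the multiset of the
nonzero numbers among `a_i − (t−i)`; the element `a` contributes the part
`a − #{b ∈ X : b < a}`. -/
def partitionOf (X : Finset ℕ) : Multiset ℕ :=
  Multiset.filter (· ≠ 0) (X.val.map fun a => a - (X.filter (· < a)).card)

/-- `r`, the maximal number of parts among the partitions `p(X_i)` of a `d`-symbol. -/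
def quotCard {d : ℕ} (S : Fin d → Finset ℕ) : ℕ :=
  Finset.univ.sup fun i => Multiset.card (partitionOf (S i))

/-- `Y` is the balanced quotient `Q(S)` of `S`: each `Y i` is the (unique) β-set of
cardinality `r` with `p(Y i) = p(S i)`, where `r` is the maximal number of parts
among the `p(S i)`. -/
def IsBalancedQuotient {d : ℕ} (S Y : Fin d → Finset ℕ) : Prop :=
  ∀ i, (Y i).card = quotCard S ∧ partitionOf (Y i) = partitionOf (S i)

/-- The core `C(S) = ([x_0],…,[x_{d−1}])` of a `d`-symbol, `x_i = |X_i|`. -/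
def coreSymbol {d : ℕ} (S : Fin d → Finset ℕ) : Fin d → Finset ℕ :=
  fun i => Finset.range (S i).card

/-- The `δ`-length `k(a−b) + c_i − c_j` of a hook `(a,b,i,j)`, for the
`d`-hook data tuple `δ = (c_0,…,c_{d−1};k)`. -/
noncomputable def hookLen {d : ℕ} (c : Fin d → ℝ) (k : ℝ)
    (z : ℕ × ℕ × Fin d × Fin d) : ℝ :=
  k * ((z.1 - z.2.1 : ℕ) : ℝ) + c z.2.2.1 - c z.2.2.2

/-- The multiset `𝓗^δ(S)` of `δ`-lengths of all hooks of `S`. -/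
noncomputable def hookLens {d : ℕ} (c : Fin d → ℝ) (k : ℝ)
    (S : Fin d → Finset ℕ) : Multiset ℝ :=
  (symbolHooks S).val.map (hookLen c k)

/-- `H_{ij}^ℓ(S)`, the set of hooks `(a,b,i,j)` of `S` with `a − b = ℓ`. -/
def Hij {d : ℕ} (S : Fin d → Finset ℕ) (i j : Fin d) (ℓ : ℕ) :
    Finset (ℕ × ℕ × Fin d × Fin d) :=
  (symbolHooks S).filter fun z => z.2.2.1 = i ∧ z.2.2.2 = j ∧ z.1 - z.2.1 = ℓ

/-- The sign-modified length `h̄^{δ_S}` (on hooks of the balanced quotient), where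
`x` records the cardinalities `x_i = |X_i|` of `S`, and `δ_S = (c_i + x_i k; k)`.
For a hook `z = (a,b,u,v)` with `ℓ = a − b`: relabelling so that `Δ = x_i − x_j ≥ 0`,
the sign is `+` if `z` lies in position `(i,j)`, or in position `(j,i)` with `ℓ > Δ`,
or in position `(j,i)` with `ℓ = Δ` and `i < j`; otherwise the sign is `−`. -/
noncomputable def signedLen {d : ℕ} (x : Fin d → ℕ) (c : Fin d → ℝ) (k : ℝ)
    (z : ℕ × ℕ × Fin d × Fin d) : ℝ :=
  if x z.2.2.2 ≤ x z.2.2.1 then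
    k * ((z.1 - z.2.1 : ℕ) : ℝ) + (c z.2.2.1 + (x z.2.2.1 : ℝ) * k)
      - (c z.2.2.2 + (x z.2.2.2 : ℝ) * k)
  else if x z.2.2.2 - x z.2.2.1 < z.1 - z.2.1 ∨
      (z.1 - z.2.1 = x z.2.2.2 - x z.2.2.1 ∧ (z.2.2.2 : ℕ) < (z.2.2.1 : ℕ)) then
    k * ((z.1 - z.2.1 : ℕ) : ℝ) + (c z.2.2.1 + (x z.2.2.1 : ℝ) * k)
      - (c z.2.2.2 + (x z.2.2.2 : ℝ) * k)
  else
    -(k * ((z.1 - z.2.1 : ℕ) : ℝ) + (c z.2.2.1 + (x z.2.2.1 : ℝ) * k)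
      - (c z.2.2.2 + (x z.2.2.2 : ℝ) * k))

/-- The permutation `σ_{d,ℓ,e}` of `ℕ`:
`σ(r(dℓ) + sd + t) = r(dℓ) + sd + ((t + re) mod d)`. -/
def twistFun (d ℓ e : ℕ) (n : ℕ) : ℕ :=
  d * ℓ * (n / (d * ℓ)) + d * (n % (d * ℓ) / d) + (n % d + n / (d * ℓ) * e) % d

open Finset

def Pcnt (A B : Finset ℕ) (ℓ : ℕ) : ℕ := (A.filter fun a => ℓ ≤ a ∧ a - ℓ ∉ B).card

def Mcnt (A B : Finset ℕ) (ℓ : ℕ) : ℕ := (B.filter fun b => b + ℓ ∉ A).card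

lemma mem_shiftUp {X : Finset ℕ} {s a : ℕ} :
    a ∈ shiftUp X s ↔ (s ≤ a ∧ a - s ∈ X) ∨ a < s := by
  simp only [shiftUp, mem_union, mem_image, mem_range]
  constructor
  · rintro (⟨b, hb, rfl⟩ | h)
    · exact Or.inl ⟨by omega, by simpa using hb⟩
    · exact Or.inr h
  · rintro (⟨h1, h2⟩ | h)
    · exact Or.inl ⟨a - s, h2, by omega⟩
    · exact Or.inr h

lemma card_shiftUp (X : Finset ℕ) (s : ℕ) : (shiftUp X s).card = X.card + s := by
  rw [shiftUp, card_union_of_disjoint, card_image_of_injective _ (add_left_injective s),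
    card_range]
  simp only [disjoint_left, mem_image, mem_range]
  rintro a ⟨b, _, rfl⟩; omega

lemma filter_lt_shiftUp (X : Finset ℕ) {s t : ℕ} (h : t ≤ s) :
    (shiftUp X s).filter (· < t) = Finset.range t := by
  ext x
  simp only [mem_filter, mem_range, mem_shiftUp]
  constructor
  · rintro ⟨_, h2⟩; exact h2
  · intro hx; exact ⟨Or.inr (by omega), hx⟩

lemma filter_lt_shiftUp_add (X : Finset ℕ) (s : ℕ) {a : ℕ} :
    ((shiftUp X s).filter (· < a + s)).card = (X.filter (· < a)).card + s := by
  have : (shiftUp X s).filter (· < a + s) = shiftUp (X.filter (· < a)) s := by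
    ext x
    simp only [mem_filter, mem_shiftUp]
    constructor
    · rintro ⟨⟨h1, h2⟩ | h1, h3⟩
      · exact Or.inl ⟨h1, h2, by omega⟩
      · exact Or.inr h1
    · rintro (⟨h1, h2, h3⟩ | h1)
      · exact ⟨Or.inl ⟨h1, h2⟩, by omega⟩
      · exact ⟨Or.inr h1, by omega⟩
  rw [this, card_shiftUp]

lemma partitionOf_shiftUp (X : Finset ℕ) (s : ℕ) :
    partitionOf (shiftUp X s) = partitionOf X := by
  have hdisj : Disjoint (X.image (· + s)) (Finset.range s) := by
    simp only [disjoint_left, mem_image, mem_range]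
    rintro a ⟨b, _, rfl⟩; omega
  have hval : (shiftUp X s).val = X.val.map (· + s) + (Finset.range s).val := by
    rw [shiftUp, ← disjUnion_eq_union _ _ hdisj]
    show (X.image (· + s)).val + (Finset.range s).val = _
    congr 1
    rw [image_val, Multiset.dedup_eq_self.mpr]
    exact Multiset.Nodup.map (add_left_injective s) X.nodup
  rw [partitionOf, hval, Multiset.map_add, Multiset.filter_add, Multiset.map_map]
  have h2 : Multiset.filter (· ≠ 0)
      ((Finset.range s).val.map fun a => a - ((shiftUp X s).filter (· < a)).card) = 0 := by
    rw [Multiset.filter_eq_nil]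
    intro a ha
    simp only [Multiset.mem_map] at ha
    obtain ⟨t, ht, rfl⟩ := ha
    rw [Finset.mem_val, mem_range] at ht
    simp only [ne_eq, not_not]
    rw [filter_lt_shiftUp X (le_of_lt ht), card_range]
    omega
  have h1 : X.val.map ((fun a => a - ((shiftUp X s).filter (· < a)).card) ∘ (· + s)) =
      X.val.map fun a => a - (X.filter (· < a)).card := by
    apply Multiset.map_congr rfl
    intro x _
    simp only [Function.comp_apply, filter_lt_shiftUp_add]
    omega
  rw [h1, h2, add_zero, partitionOf]

lemma key_count (A B : Finset ℕ) (ℓ : ℕ) :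
    Pcnt A B ℓ + B.card = Mcnt A B ℓ + (A.filter fun a => ℓ ≤ a).card := by
  have hA : (A.filter fun a => ℓ ≤ a).card
      = Pcnt A B ℓ + ((A.filter fun a => ℓ ≤ a ∧ a - ℓ ∈ B)).card := by
    rw [Pcnt]
    rw [← card_filter_add_card_filter_not (s := A.filter fun a => ℓ ≤ a)
      (fun a => a - ℓ ∉ B)]
    congr 1
    · rw [filter_filter]
    · rw [filter_filter]
      congr 1
      ext a
      simp only [not_not]
  have hB : B.card = Mcnt A B ℓ + ((B.filter fun b => b + ℓ ∈ A)).card := by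
    rw [Mcnt, ← card_filter_add_card_filter_not (s := B) (fun b => b + ℓ ∉ A)]
    congr 2
    ext b
    simp only [not_not]
  have hbij : ((B.filter fun b => b + ℓ ∈ A)).card
      = ((A.filter fun a => ℓ ≤ a ∧ a - ℓ ∈ B)).card := by
    apply card_nbij' (fun b => b + ℓ) (fun a => a - ℓ)
    · intro b hb
      simp only [mem_coe, mem_filter] at hb ⊢
      exact ⟨hb.2, by omega, by simpa using hb.1⟩
    · intro a ha
      simp only [mem_coe, mem_filter] at ha ⊢
      obtain ⟨_, h1, h2⟩ := ha
      refine ⟨h2, ?_⟩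
      rwa [Nat.sub_add_cancel h1]
    · intro b _; dsimp only; omega
    · intro a ha
      simp only [mem_coe, mem_filter] at ha
      dsimp only
      omega
  omega

lemma Pcnt_shift (A B : Finset ℕ) (s ℓ : ℕ) (hℓ : 0 < ℓ) :
    Pcnt (shiftUp A s) (shiftUp B s) ℓ = Pcnt A B ℓ := by
  apply card_nbij' (fun a => a - s) (fun a => a + s)
  · intro a ha
    simp only [mem_coe, mem_filter, mem_shiftUp, not_or, not_and, not_lt] at ha ⊢
    obtain ⟨h1 | h1, h2, h3⟩ := ha
    · refine ⟨h1.2, ?_, ?_⟩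
      · have := h3.2; omega
      · have h4 := h3.1 (by omega)
        have : a - s - ℓ = a - ℓ - s := by omega
        rw [this]; exact h4
    · exact absurd (h3.2) (by omega)
  · intro a ha
    simp only [mem_coe, mem_filter, mem_shiftUp, not_or, not_and, not_lt] at ha ⊢
    obtain ⟨h1, h2, h3⟩ := ha
    refine ⟨Or.inl ⟨by omega, by simpa using h1⟩, by omega, ?_, by omega⟩
    intro _
    have : a + s - ℓ - s = a - ℓ := by omega
    rw [this]; exact h3
  · intro a ha
    simp only [mem_coe, mem_filter, mem_shiftUp] at ha
    dsimp only
    obtain ⟨h1 | h1, _, _⟩ := ha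
    · omega
    · omega
  · intro a _; dsimp only; omega

lemma Mcnt_shift (Xi Xj : Finset ℕ) (si ℓ m : ℕ) :
    Mcnt (shiftUp Xj (si + ℓ + m)) (shiftUp Xi si) m = Pcnt Xi Xj ℓ := by
  apply card_nbij' (fun b => b - si) (fun c => c + si)
  · intro b hb
    simp only [mem_coe, mem_filter, mem_shiftUp, not_or, not_and, not_lt] at hb ⊢
    obtain ⟨h1 | h1, h2⟩ := hb
    · refine ⟨h1.2, by omega, ?_⟩
      have h4 := h2.1 (by omega)
      have : b - si - ℓ = b + m - (si + ℓ + m) := by omega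
      rw [this]; exact h4
    · exact absurd h2.2 (by omega)
  · intro c hc
    simp only [mem_coe, mem_filter, mem_shiftUp, not_or, not_and, not_lt] at hc ⊢
    obtain ⟨h1, h2, h3⟩ := hc
    refine ⟨Or.inl ⟨by omega, by simpa using h1⟩, ?_, by omega⟩
    intro _
    have : c + si + m - (si + ℓ + m) = c - ℓ := by omega
    rw [this]; exact h3
  · intro b hb
    simp only [mem_coe, mem_filter, mem_shiftUp, not_or, not_and, not_lt] at hb
    dsimp only
    obtain ⟨h1 | h1, h2⟩ := hb
    · omega
    · omega
  · intro c _; dsimp only; omega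

def bpart (X : Finset ℕ) (a : ℕ) : ℕ := a - (X.filter (· < a)).card

lemma partitionOf_eq (X : Finset ℕ) :
    partitionOf X = Multiset.filter (· ≠ 0) (X.val.map (bpart X)) := rfl

lemma filter_lt_max' (A : Finset ℕ) (h : A.Nonempty) :
    A.filter (· < A.max' h) = A.erase (A.max' h) := by
  ext x
  simp only [mem_filter, mem_erase]
  constructor
  · rintro ⟨h1, h2⟩; exact ⟨by omega, h1⟩
  · rintro ⟨h1, h2⟩
    exact ⟨h2, lt_of_le_of_ne (A.le_max' x h2) h1⟩

lemma bpart_max' (A : Finset ℕ) (h : A.Nonempty) :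
    bpart A (A.max' h) = A.max' h - (A.card - 1) := by
  rw [bpart, filter_lt_max', card_erase_of_mem (A.max'_mem h)]

lemma bpart_le_bpart_max' (A : Finset ℕ) (h : A.Nonempty) {x : ℕ} (hx : x ∈ A) :
    bpart A x ≤ bpart A (A.max' h) := by
  set a := A.max' h with ha
  have hxa : x ≤ a := A.le_max' x hx
  have hsplit : (A.filter (· < a)).card
      = (A.filter (· < x)).card + (A.filter fun b => x ≤ b ∧ b < a).card := by
    rw [← card_union_of_disjoint, ← filter_or]
    · congr 1; ext b; simp only [mem_filter]; constructor
      · rintro ⟨hb, h2⟩; exact ⟨hb, by omega⟩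
      · rintro ⟨hb, h2 | ⟨h2, h3⟩⟩
        · exact ⟨hb, by omega⟩
        · exact ⟨hb, h3⟩
    · simp only [disjoint_left, mem_filter]
      rintro b ⟨_, h1⟩ ⟨_, h2, _⟩; omega
  have hIco : (A.filter fun b => x ≤ b ∧ b < a).card ≤ a - x := by
    have : (A.filter fun b => x ≤ b ∧ b < a) ⊆ Finset.Ico x a := by
      intro b hb; simp only [mem_filter] at hb; simp only [mem_Ico]; omega
    calc _ ≤ (Finset.Ico x a).card := card_le_card this
    _ = a - x := Nat.card_Ico x a
  have hcx : (A.filter (· < x)).card ≤ x := by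
    have : (A.filter (· < x)) ⊆ Finset.range x := by
      intro b hb; simp only [mem_filter] at hb; simp only [mem_range]; exact hb.2
    calc _ ≤ (Finset.range x).card := card_le_card this
    _ = x := card_range x
  have hcard : (A.filter (· < a)).card = A.card - 1 := by
    rw [filter_lt_max', card_erase_of_mem (A.max'_mem h)]
  rw [bpart, bpart, hcard]
  omega

lemma mem_partitionOf {A : Finset ℕ} {x : ℕ} (hx : x ∈ A) (h0 : bpart A x ≠ 0) :
    bpart A x ∈ partitionOf A := by
  rw [partitionOf_eq, Multiset.mem_filter]
  exact ⟨Multiset.mem_map_of_mem _ hx, h0⟩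

lemma eq_range_of_partitionOf_eq_zero {A : Finset ℕ} (h : partitionOf A = 0) :
    A = Finset.range A.card := by
  have hzero : ∀ x ∈ A, bpart A x = 0 := by
    intro x hx
    by_contra h0
    have := mem_partitionOf hx h0
    rw [h] at this
    exact absurd this (Multiset.notMem_zero _)
  have hsub : A ⊆ Finset.range A.card := by
    intro x hx
    have h1 := hzero x hx
    have h2 : (A.filter (· < x)) ⊆ A.erase x := by
      intro b hb; simp only [mem_filter] at hb; simp only [mem_erase]
      exact ⟨by omega, hb.1⟩
    have h3 : (A.filter (· < x)).card ≤ A.card - 1 := by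
      calc _ ≤ (A.erase x).card := card_le_card h2
      _ = A.card - 1 := card_erase_of_mem hx
    have h4 : 0 < A.card := card_pos.mpr ⟨x, hx⟩
    rw [mem_range, bpart] at *
    omega
  exact (eq_of_subset_of_card_le hsub (by rw [card_range])).symm.symm

lemma partitionOf_erase_max' (A : Finset ℕ) (h : A.Nonempty)
    (h0 : bpart A (A.max' h) ≠ 0) :
    partitionOf A = bpart A (A.max' h) ::ₘ partitionOf (A.erase (A.max' h)) := by
  set a := A.max' h with ha
  have hval : A.val = a ::ₘ (A.erase a).val := by
    rw [erase_val]
    exact (Multiset.cons_erase (show a ∈ A.val from A.max'_mem h)).symm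
  have hcongr : (A.erase a).val.map (bpart A) = (A.erase a).val.map (bpart (A.erase a)) := by
    apply Multiset.map_congr rfl
    intro x hx
    rw [Finset.mem_val, mem_erase] at hx
    have hxa : x < a := lt_of_le_of_ne (A.le_max' x hx.2) hx.1
    rw [bpart, bpart]
    congr 2
    ext b
    simp only [mem_filter, mem_erase]
    constructor
    · rintro ⟨h1, h2⟩; exact ⟨⟨by omega, h1⟩, h2⟩
    · rintro ⟨⟨_, h1⟩, h2⟩; exact ⟨h1, h2⟩
  rw [partitionOf_eq, partitionOf_eq, hval, Multiset.map_cons, hcongr]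
  exact Multiset.filter_cons_of_pos _ h0

lemma beta_unique : ∀ (n : ℕ) (A B : Finset ℕ), A.card = n → B.card = n →
    partitionOf A = partitionOf B → A = B := by
  intro n
  induction n with
  | zero =>
    intro A B hA hB _
    rw [card_eq_zero] at hA hB
    rw [hA, hB]
  | succ n ih =>
    intro A B hA hB hP
    have hAne : A.Nonempty := card_pos.mp (by omega)
    have hBne : B.Nonempty := card_pos.mp (by omega)
    by_cases h0 : partitionOf A = 0
    · have h0' : partitionOf B = 0 := hP ▸ h0
      rw [eq_range_of_partitionOf_eq_zero h0, eq_range_of_partitionOf_eq_zero h0', hA, hB]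
    · set a := A.max' hAne with hadef
      set b := B.max' hBne with hbdef
      have hμA : bpart A a ≠ 0 := by
        intro hz
        apply h0
        rw [partitionOf_eq, Multiset.filter_eq_nil]
        intro p hp
        simp only [Multiset.mem_map] at hp
        obtain ⟨x, hx, rfl⟩ := hp
        rw [Finset.mem_val] at hx
        have hle1 := bpart_le_bpart_max' A hAne hx
        rw [← hadef] at hle1
        simp only [ne_eq, not_not]
        omega
      have hμB : bpart B b ≠ 0 := by
        intro hz
        apply h0
        rw [hP, partitionOf_eq, Multiset.filter_eq_nil]
        intro p hp
        simp only [Multiset.mem_map] at hp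
        obtain ⟨x, hx, rfl⟩ := hp
        rw [Finset.mem_val] at hx
        have hle1 := bpart_le_bpart_max' B hBne hx
        rw [← hbdef] at hle1
        simp only [ne_eq, not_not]
        omega
      have hle : ∀ (C : Finset ℕ) (hC : C.Nonempty) (p : ℕ), p ∈ partitionOf C →
          p ≤ bpart C (C.max' hC) := by
        intro C hC p hp
        rw [partitionOf_eq, Multiset.mem_filter, Multiset.mem_map] at hp
        obtain ⟨⟨x, hx, rfl⟩, _⟩ := hp
        rw [Finset.mem_val] at hx
        exact bpart_le_bpart_max' C hC hx
      have hμAB : bpart A a = bpart B b := by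
        have h1 : bpart A a ∈ partitionOf B := hP ▸ mem_partitionOf (A.max'_mem hAne) hμA
        have h2 : bpart B b ∈ partitionOf A := by
          rw [hP]; exact mem_partitionOf (B.max'_mem hBne) hμB
        exact le_antisymm (hle B hBne _ h1) (hle A hAne _ h2)
      have hna : n ≤ a := by
        have : A ⊆ Finset.range (a + 1) := by
          intro x hx; rw [mem_range]; have := A.le_max' x hx; omega
        have := card_le_card this
        rw [card_range] at this
        omega
      have hnb : n ≤ b := by
        have : B ⊆ Finset.range (b + 1) := by
          intro x hx; rw [mem_range]; have := B.le_max' x hx; omega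
        have := card_le_card this
        rw [card_range] at this
        omega
      have hab : a = b := by
        have h1 := bpart_max' A hAne
        have h2 := bpart_max' B hBne
        rw [← hadef] at h1
        rw [← hbdef] at h2
        rw [h1, h2, hA, hB] at hμAB
        omega
      have hPA := partitionOf_erase_max' A hAne hμA
      have hPB := partitionOf_erase_max' B hBne hμB
      rw [← hadef] at hPA
      rw [← hbdef] at hPB
      have hPe : partitionOf (A.erase a) = partitionOf (B.erase b) := by
        have : bpart A a ::ₘ partitionOf (A.erase a)
            = bpart A a ::ₘ partitionOf (B.erase b) := by
          rw [← hPA, hP, hPB, hμAB]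
        exact (Multiset.cons_inj_right _).mp this
      have hres := ih (A.erase a) (B.erase b)
        (by rw [card_erase_of_mem (A.max'_mem hAne)]; omega)
        (by rw [card_erase_of_mem (B.max'_mem hBne)]; omega) hPe
      have : insert a (A.erase a) = insert b (B.erase b) := by rw [hres, hab]
      rwa [insert_erase (A.max'_mem hAne), insert_erase (B.max'_mem hBne)] at this

lemma shift_unique (X Y : Finset ℕ) (sX sY : ℕ) (hcard : X.card + sX = Y.card + sY)
    (hpart : partitionOf X = partitionOf Y) : shiftUp X sX = shiftUp Y sY :=
  beta_unique (X.card + sX) _ _ (card_shiftUp X sX)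
    (by rw [card_shiftUp]; omega)
    (by rw [partitionOf_shiftUp, partitionOf_shiftUp]; exact hpart)

lemma card_Hij_eq_Pcnt {d : ℕ} (S : Fin d → Finset ℕ) (i j : Fin d) (ℓ : ℕ) (hℓ : 0 < ℓ) :
    (Hij S i j ℓ).card = Pcnt (S i) (S j) ℓ := by
  apply card_nbij' (fun z => z.1) (fun a => (a, a - ℓ, i, j))
  · rintro ⟨a, b, u, v⟩ hz
    simp only [mem_coe, Hij, symbolHooks, mem_filter, mem_product, mem_range] at hz
    obtain ⟨⟨⟨h1, h2, _, _⟩, h3, h4, h5⟩, hi, hj, hl⟩ := hz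
    subst hi; subst hj
    simp only [mem_coe, Pcnt, mem_filter]
    have hlt : b < a := by
      rcases h5 with h | ⟨h, _⟩ <;> omega
    refine ⟨h3, by omega, ?_⟩
    have : a - ℓ = b := by omega
    rw [this]; exact h4
  · intro a ha
    simp only [mem_coe, Pcnt, mem_filter] at ha
    obtain ⟨ha1, ha2, ha3⟩ := ha
    have hsup : a ≤ Finset.univ.sup fun i => (S i).sup id :=
      le_trans (Finset.le_sup (f := id) ha1)
        (Finset.le_sup (f := fun i => (S i).sup id) (mem_univ i))
    simp only [mem_coe, Hij, symbolHooks, mem_filter, mem_product, mem_range]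
    exact ⟨⟨⟨by omega, by omega, mem_univ _, mem_univ _⟩, ha1, ha3, Or.inl (by omega)⟩,
      trivial, trivial, by omega⟩
  · rintro ⟨a, b, u, v⟩ hz
    simp only [mem_coe, Hij, symbolHooks, mem_filter, mem_product, mem_range] at hz
    obtain ⟨⟨⟨h1, h2, _, _⟩, h3, h4, h5⟩, hi, hj, hl⟩ := hz
    subst hi; subst hj
    have hlt : b < a := by rcases h5 with h | ⟨h, _⟩ <;> omega
    have : a - ℓ = b := by omega
    simp only [this]
  · intro a _; rfl

/-- For `i ≠ j` with `Δ = |X_i| − |X_j| > 0` and all `0 < ℓ < Δ`: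
`|H_{ij}^ℓ(S)| = |H_{ji}^{Δ−ℓ}(Q)| + |H_{ij}^ℓ(C)|`. -/
theorem card_Hij_of_lt_delta (d : ℕ) (hd : 0 < d) (S Y : Fin d → Finset ℕ)
    (hY : IsBalancedQuotient S Y) (i j : Fin d) (hij : i ≠ j)
    (hΔ : (S j).card < (S i).card) (ℓ : ℕ) (hℓ0 : 0 < ℓ)
    (hℓ : ℓ < (S i).card - (S j).card) :
    (Hij S i j ℓ).card =
      (Hij Y j i (((S i).card - (S j).card) - ℓ)).card +
        (Hij (coreSymbol S) i j ℓ).card := by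
  obtain ⟨hYci, hYpi⟩ := hY i
  obtain ⟨hYcj, hYpj⟩ := hY j
  set xi := (S i).card with hxi
  set xj := (S j).card with hxj
  set r := quotCard S with hr
  set N := max xi r with hNdef
  have hxiN : xi ≤ N := le_max_left _ _
  have hrN : r ≤ N := le_max_right _ _
  set Δ := xi - xj with hΔdef
  have h1 : (Hij S i j ℓ).card = Pcnt (S i) (S j) ℓ := card_Hij_eq_Pcnt S i j ℓ hℓ0
  have h2 : (Hij Y j i (Δ - ℓ)).card = Pcnt (Y j) (Y i) (Δ - ℓ) :=
    card_Hij_eq_Pcnt Y j i _ (by omega)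
  have h3 : (Hij (coreSymbol S) i j ℓ).card
      = Pcnt (Finset.range xi) (Finset.range xj) ℓ :=
    card_Hij_eq_Pcnt (coreSymbol S) i j ℓ hℓ0
  have h3' : Pcnt (Finset.range xi) (Finset.range xj) ℓ = Δ - ℓ := by
    rw [Pcnt]
    have he : (Finset.range xi).filter (fun a => ℓ ≤ a ∧ a - ℓ ∉ Finset.range xj)
        = Finset.Ico (xj + ℓ) xi := by
      ext x
      simp only [mem_filter, mem_range, mem_Ico, not_lt]
      omega
    rw [he, Nat.card_Ico]
    omega
  have hA : shiftUp (Y i) (N - r) = shiftUp (S i) (N - xi) :=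
    shift_unique _ _ _ _ (by omega) hYpi
  have hB : shiftUp (Y j) (N - r) = shiftUp (S j) (N - xj) :=
    shift_unique _ _ _ _ (by omega) hYpj
  have step2 : Pcnt (S i) (S j) ℓ
      = Mcnt (shiftUp (S j) (N - xj)) (shiftUp (S i) (N - xi)) (Δ - ℓ) := by
    have he : N - xj = (N - xi) + ℓ + (Δ - ℓ) := by omega
    rw [he, Mcnt_shift]
  have step3 : Mcnt (shiftUp (S j) (N - xj)) (shiftUp (S i) (N - xi)) (Δ - ℓ)
      = Pcnt (shiftUp (S j) (N - xj)) (shiftUp (S i) (N - xi)) (Δ - ℓ) + (Δ - ℓ) := by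
    have hk := key_count (shiftUp (S j) (N - xj)) (shiftUp (S i) (N - xi)) (Δ - ℓ)
    have hcB : (shiftUp (S i) (N - xi)).card = N := by rw [card_shiftUp]; omega
    have hcA : (shiftUp (S j) (N - xj)).card = N := by rw [card_shiftUp]; omega
    have hflt : ((shiftUp (S j) (N - xj)).filter (fun a => a < (Δ - ℓ))).card = Δ - ℓ := by
      rw [filter_lt_shiftUp _ (by omega : Δ - ℓ ≤ N - xj), card_range]
    have hsplit := card_filter_add_card_filter_not
      (s := shiftUp (S j) (N - xj)) (fun a => a < (Δ - ℓ))
    have hneg : ((shiftUp (S j) (N - xj)).filter (fun a => ¬ a < (Δ - ℓ))).card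
        = ((shiftUp (S j) (N - xj)).filter (fun a => (Δ - ℓ) ≤ a)).card := by
      congr 1
      apply filter_congr
      intro x _
      simp only [not_lt]
    rw [hcA, hflt, hneg] at hsplit
    rw [hcB] at hk
    omega
  have step4 : Pcnt (shiftUp (S j) (N - xj)) (shiftUp (S i) (N - xi)) (Δ - ℓ)
      = Pcnt (Y j) (Y i) (Δ - ℓ) := by
    rw [← hB, ← hA, Pcnt_shift _ _ _ _ (by omega)]
  rw [h1, step2, step3, step4, ← h2, h3, h3']
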